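/- arXiv:1402.2714 — 3 statements merged into one kernel-verified Lean document; each statement's English description precedes it below -/
import Mathlib

section
/- The map sending x to the upper triangular matrix [[e^{u/2},1],[0,e^{-u/2}]] and y to the lower triangular matrix [[e^{u/2},0],[-d,e^{-u/2}]], where d = cosh(u) - 3/2 ± (1/2)√((2cosh u + 1)(2cosh u - 3)), defines a representation of the figure-eight knot group ⟨x,y | x y⁻¹ x⁻¹ y x = y x y⁻¹ x⁻¹ y⟩ into SL(2,ℂ); that is, the assigned matrices satisfy X Y⁻¹ X⁻¹ Y X = Y X Y⁻¹ X⁻¹ Y. -/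
open Complex Matrix

/-- The assignment x ↦ X, y ↦ Y satisfies the figure-eight knot group relation
`x y⁻¹ x⁻¹ y x = y x y⁻¹ x⁻¹ y`, hence defines a representation of
⟨x,y | x y⁻¹ x⁻¹ y x = y x y⁻¹ x⁻¹ y⟩ into SL(2,ℂ). Here
`s` is a fixed complex square root of `(2cosh u + 1)(2cosh u - 3)` and
`d = cosh u - 3/2 + s/2` (either choice of square root gives either sign `±`). -/
theorem figure_eight_representation (u s : ℂ)
    (hs : s ^ 2 = (2 * Complex.cosh u + 1) * (2 * Complex.cosh u - 3))
    (d : ℂ) (hd : d = Complex.cosh u - 3 / 2 + s / 2)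
    (X Y : Matrix (Fin 2) (Fin 2) ℂ)
    (hX : X = !![Complex.exp (u / 2), 1; 0, Complex.exp (-u / 2)])
    (hY : Y = !![Complex.exp (u / 2), 0; -d, Complex.exp (-u / 2)]) :
    X * Y⁻¹ * X⁻¹ * Y * X = Y * X * Y⁻¹ * X⁻¹ * Y := by
  set e := Complex.exp (u / 2) with he
  set f := Complex.exp (-u / 2) with hf
  have hef : e * f = 1 := by
    rw [he, hf, ← Complex.exp_add]; ring_nf; exact Complex.exp_zero
  have hcosh : Complex.cosh u = (e * e + f * f) / 2 := by
    rw [Complex.cosh, he, hf, ← Complex.exp_add, ← Complex.exp_add]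
    ring_nf
  have hXinv : X⁻¹ = !![f, -1; 0, e] := by
    apply Matrix.inv_eq_right_inv
    rw [hX]
    ext i j
    fin_cases i <;> fin_cases j <;>
      simp [Matrix.mul_apply, Fin.sum_univ_two] <;> linear_combination hef
  have hYinv : Y⁻¹ = !![f, 0; d, e] := by
    apply Matrix.inv_eq_right_inv
    rw [hY]
    ext i j
    fin_cases i <;> fin_cases j <;>
      simp [Matrix.mul_apply, Fin.sum_univ_two] <;> first | linear_combination hef | linear_combination -hef | ring
  rw [hXinv, hYinv, hX, hY]
  have hd2 : d * d + (3 - e * e - f * f) * d + (3 - e * e - f * f) = 0 := by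
    rw [hd]
    linear_combination hs / 4 + (2 * Complex.cosh u + s - 1) * hcosh
  ext i j
  fin_cases i <;> fin_cases j <;>
    simp [Matrix.mul_apply, Fin.sum_univ_two]
  · ring
  · linear_combination hd2 + (3 - f^2 + 3*e*f - e^2 + 3*d) * hef
  · linear_combination (-3 + 3*e*f + d) * hd2 +
      (-9 + 3*f^2 + 3*e^2 - 6*d + 2*d*f^2 + 3*d*e*f + 2*d*e^2) * hef
  · ring
end

section
/- In the group with presentation ⟨x,y,p,q | (xy)^a x = y(xy)^a, x λ_C = λ_C x, λ_C x^b p = q x^b λ_C, x = pq⟩ where λ_C = y(xy)^{2a}x^{-4a-1}, the relation x λ_C = λ_C x is a consequence of the relation (xy)^a x = y(xy)^a; that is, in ⟨x,y | (xy)^a x = y(xy)^a⟩ one has x λ_C x⁻¹ λ_C⁻¹ = 1. -/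
/-- In ⟨x,y | (xy)^a x = y (xy)^a⟩, the element x commutes with
λ_C = y (xy)^{2a} x^{-4a-1}; that is, x λ_C x⁻¹ λ_C⁻¹ = 1.
(Stated for an arbitrary group with elements satisfying the relation,
which is equivalent to the statement in the presented group.) -/
theorem longitude_commutes_with_meridian (a : ℕ) (ha : 0 < a)
    {G : Type*} [Group G] (x y : G)
    (h : (x * y) ^ a * x = y * (x * y) ^ a) :
    x * (y * (x * y) ^ (2 * a) * (x ^ (4 * a + 1))⁻¹) =
      (y * (x * y) ^ (2 * a) * (x ^ (4 * a + 1))⁻¹) * x := by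
  set z := x * y with hz
  have key : x * z ^ a * x = z ^ (a + 1) := by
    rw [mul_assoc, h, ← mul_assoc, ← hz, ← pow_succ']
  have h1 : z ^ (2 * a + 1) = z ^ a * (x * z ^ a * x) := by
    rw [key, ← pow_add]; congr 1; ring
  have h2 : z ^ (2 * a + 1) = x * z ^ a * x * z ^ a := by
    rw [key, ← pow_add]; congr 1; ring
  have comm : x * z ^ (2 * a + 1) = z ^ (2 * a + 1) * x := by
    conv_lhs => rw [h1]
    conv_rhs => rw [h2]
    group
  have h3 : z ^ (2 * a + 1) = x * (y * z ^ (2 * a)) := by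
    rw [pow_succ', hz]; group
  have comm2 : x * (y * z ^ (2 * a)) = (y * z ^ (2 * a)) * x := by
    apply mul_left_cancel (a := x)
    calc x * (x * (y * z ^ (2 * a))) = x * z ^ (2 * a + 1) := by rw [h3]
      _ = z ^ (2 * a + 1) * x := comm
      _ = x * ((y * z ^ (2 * a)) * x) := by rw [h3]; group
  calc x * (y * z ^ (2 * a) * (x ^ (4 * a + 1))⁻¹)
      = (x * (y * z ^ (2 * a))) * (x ^ (4 * a + 1))⁻¹ := by group
    _ = ((y * z ^ (2 * a)) * x) * (x ^ (4 * a + 1))⁻¹ := by rw [comm2]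
    _ = (y * z ^ (2 * a)) * (x ^ (4 * a + 1))⁻¹ * x := by group
end

section
/- Let α ∈ ℂ* and p ∈ ℂ, and let C_θ = {t e^{iθ} : t ∈ ℝ} with Re(α e^{2iθ}) > 0. Then √(α/π) ∫_{C_θ} exp(-αx² + px) dx = exp(p²/(4α)), for an appropriate branch of the square root. -/
open Complex MeasureTheory

/-- Gaussian integral along the line C_θ = {t e^{iθ} : t ∈ ℝ}: for α ∈ ℂ* with
Re(α e^{2iθ}) > 0 and p ∈ ℂ, √(α/π) ∫_{C_θ} exp(-αx² + px) dx = exp(p²/(4α))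
for the appropriate branch of the square root. -/
theorem gaussian_integral_line (α p : ℂ) (hα : α ≠ 0) (θ : ℝ)
    (hre : 0 < (α * Complex.exp (2 * θ * Complex.I)).re) :
    ∃ s : ℂ, s ^ 2 = α / (Real.pi : ℂ) ∧
      s * ∫ t : ℝ,
          Complex.exp (-α * ((t : ℂ) * Complex.exp (θ * Complex.I)) ^ 2 +
              p * ((t : ℂ) * Complex.exp (θ * Complex.I))) *
            Complex.exp (θ * Complex.I) =
        Complex.exp (p ^ 2 / (4 * α)) := by
  set E : ℂ := Complex.exp (θ * Complex.I) with hE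
  set β : ℂ := α * Complex.exp (2 * θ * Complex.I) with hβ
  have hE2 : E ^ 2 = Complex.exp (2 * θ * Complex.I) := by
    rw [hE, sq, ← Complex.exp_add]; ring_nf
  have hβ' : β = α * E ^ 2 := by rw [hE2]
  have hβ0 : β ≠ 0 := by
    intro h; rw [h] at hre; simp at hre
  have hE0 : E ≠ 0 := Complex.exp_ne_zero _
  have hπ : (Real.pi : ℂ) ≠ 0 := by
    exact_mod_cast Real.pi_ne_zero
  have hq : ((Real.pi : ℂ) / β) ≠ 0 := div_ne_zero hπ hβ0
  set r : ℂ := ((Real.pi : ℂ) / β) ^ (1 / 2 : ℂ) with hr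
  have hr2 : r ^ 2 = (Real.pi : ℂ) / β := by
    rw [hr, show (1/2:ℂ) = ((2:ℕ):ℂ)⁻¹ by norm_num,
      Complex.cpow_nat_inv_pow _ two_ne_zero]
  have hr0 : r ≠ 0 := by
    intro h
    apply hq
    rw [← hr2, h]; ring
  refine ⟨(E * r)⁻¹, ?_, ?_⟩
  · rw [inv_pow, mul_pow, hr2]
    field_simp [hβ']
    rw [hβ']; ring
  · have hint : (∫ t : ℝ,
        Complex.exp (-α * ((t : ℂ) * E) ^ 2 + p * ((t : ℂ) * E)) * E)
        = (∫ t : ℝ, Complex.exp ((-β) * (t : ℂ) ^ 2 + (p * E) * (t : ℂ) + 0)) * E := by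
      rw [integral_mul_const]
      congr 1
      refine congrArg _ (funext fun t => ?_)
      congr 1
      rw [hβ']
      ring
    rw [hint]
    rw [integral_cexp_quadratic (by simpa using hre) (p * E) 0]
    have h1 : ((Real.pi : ℂ) / -(-β)) ^ (1 / 2 : ℂ) = r := by rw [hr]; ring_nf
    have h2 : (0 : ℂ) - (p * E) ^ 2 / (4 * -β) = p ^ 2 / (4 * α) := by
      rw [hβ']
      field_simp
      ring
    rw [h1, h2]
    field_simp
end
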